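/- Split conformal coverage: let (X_1,Y_1),...,(X_{n+1},Y_{n+1}) be i.i.d., let Ŝ be a fixed (pre-trained) score function independent of these data, set S_i = Ŝ(X_i,Y_i), and let q̂ be the ⌈(1−α)(n+1)⌉-th smallest value among S_1,...,S_n (with q̂ = ∞ if ⌈(1−α)(n+1)⌉ > n). Then P(S_{n+1} ≤ q̂) ≥ 1 − α. -/

import Mathlib

open MeasureTheory ProbabilityTheory Finset
open scoped ENNReal

lemma aux_count {N k : ℕ} (hk : k ≤ N) (v : Fin N → ℝ) :
    k ≤ (univ.filter fun j : Fin N => (univ.filter fun i : Fin N => v i < v j).card < k).card := by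
  by_contra hlt
  push_neg at hlt
  set Good := univ.filter fun j : Fin N => (univ.filter fun i : Fin N => v i < v j).card < k
    with hG
  have hne : (univ \ Good).Nonempty := by
    rw [sdiff_nonempty]
    intro hsub
    have h1 := card_le_card hsub
    rw [card_univ, Fintype.card_fin] at h1
    omega
  obtain ⟨j0, hj0, hmin⟩ := (univ \ Good).exists_min_image v hne
  have hsub : (univ.filter fun i : Fin N => v i < v j0) ⊆ Good := by
    intro i hi
    simp only [mem_filter, mem_univ, true_and] at hi
    by_contra hiG
    exact absurd hi (not_lt.mpr (hmin i (mem_sdiff.mpr ⟨mem_univ i, hiG⟩)))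
  have hj0G : j0 ∈ Good := by
    rw [hG, mem_filter]
    exact ⟨mem_univ _, lt_of_le_of_lt (card_le_card hsub) hlt⟩
  exact (mem_sdiff.mp hj0).2 hj0G

open scoped Classical in
lemma aux_sum {Ω : Type*} [MeasureSpace Ω] [IsProbabilityMeasure (volume : Measure Ω)]
    {N k : ℕ} (A : Fin N → Set Ω) (hA : ∀ j, MeasurableSet (A j))
    (h : ∀ ω, k ≤ (univ.filter fun j => ω ∈ A j).card) :
    (k : ℝ≥0∞) ≤ ∑ j, volume (A j) := by
  have key : ∀ ω, (k : ℝ≥0∞) ≤ ∑ j, (A j).indicator (fun _ => (1 : ℝ≥0∞)) ω := by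
    intro ω
    have : ∑ j, (A j).indicator (fun _ => (1 : ℝ≥0∞)) ω
        = ((univ.filter fun j => ω ∈ A j).card : ℝ≥0∞) := by
      rw [Finset.card_filter]
      push_cast
      simp [Set.indicator_apply]
    rw [this]
    exact_mod_cast Nat.cast_le.mpr (h ω)
  calc (k : ℝ≥0∞) = ∫⁻ _, (k : ℝ≥0∞) ∂(volume : Measure Ω) := by simp
    _ ≤ ∫⁻ ω, ∑ j, (A j).indicator (fun _ => (1 : ℝ≥0∞)) ω ∂(volume : Measure Ω) :=
        lintegral_mono key
    _ = ∑ j, ∫⁻ ω, (A j).indicator (fun _ => (1 : ℝ≥0∞)) ω ∂(volume : Measure Ω) :=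
        lintegral_finset_sum _ (fun j _ => measurable_const.indicator (hA j))
    _ = ∑ j, volume (A j) := Finset.sum_congr rfl fun j _ => lintegral_indicator_one (hA j)

lemma aux_filter_perm_card {N : ℕ} (σ : Equiv.Perm (Fin N)) (p : Fin N → Prop)
    [DecidablePred p] [DecidablePred fun i => p (σ i)] :
    (univ.filter fun i => p (σ i)).card = (univ.filter p).card := by
  refine Finset.card_bij (fun a _ => σ a) ?_ ?_ ?_
  · intro a ha
    simp only [mem_filter, mem_univ, true_and] at ha ⊢
    exact ha
  · intro a _ b _ h
    exact σ.injective h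
  · intro b hb
    refine ⟨σ.symm b, ?_, by simp⟩
    simp only [mem_filter, mem_univ, true_and] at hb ⊢
    simpa using hb

theorem split_conformal_coverage
    {Ω : Type*} [MeasureSpace Ω] [IsProbabilityMeasure (volume : Measure Ω)]
    {γ : Type*} [MeasurableSpace γ]
    (n : ℕ) (α : ℝ) (hα : α ∈ Set.Ioo (0 : ℝ) 1)
    (Z : Fin (n + 1) → Ω → γ) (S : γ → ℝ)
    (hZmeas : ∀ i, Measurable (Z i)) (hSmeas : Measurable S)
    (hindep : iIndepFun Z volume)
    (hident : ∀ i j, IdentDistrib (Z i) (Z j)) :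
    ENNReal.ofReal (1 - α) ≤
      volume {ω : Ω | (S (Z (Fin.last n) ω) : EReal) ≤
        sInf {t : EReal | ⌈(1 - α) * (n + 1)⌉₊ ≤
          (univ.filter fun i : Fin n =>
            (S (Z i.castSucc ω) : EReal) ≤ t).card}} := by
  classical
  obtain ⟨hα0, hα1⟩ := hα
  set k : ℕ := ⌈(1 - α) * (n + 1)⌉₊ with hkdef
  have hkle : k ≤ n + 1 := by
    rw [hkdef]
    apply Nat.ceil_le.mpr
    push_cast
    nlinarith
  have hlek : (1 - α) * (n + 1) ≤ (k : ℝ) := Nat.le_ceil _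
  set ν := Measure.map (Z 0) (volume : Measure Ω) with hν
  haveI : IsProbabilityMeasure ν := Measure.isProbabilityMeasure_map (hZmeas 0).aemeasurable
  set W : Ω → (Fin (n + 1) → γ) := fun ω i => Z i ω with hWdef
  have hWmeas : Measurable W := measurable_pi_lambda _ hZmeas
  have hmapZ : ∀ i, Measure.map (Z i) volume = ν := fun i => (hident i 0).map_eq
  have hW : Measure.map W volume = Measure.pi (fun _ : Fin (n + 1) => ν) := by
    refine (Measure.pi_eq fun s hs => ?_).symm
    rw [Measure.map_apply hWmeas (MeasurableSet.univ_pi hs)]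
    have hpre : W ⁻¹' Set.pi Set.univ s = ⋂ i ∈ (univ : Finset (Fin (n + 1))), Z i ⁻¹' s i := by
      ext ω
      simp [Set.mem_pi, hWdef]
    rw [hpre, hindep.measure_inter_preimage_eq_mul univ (fun i _ => hs i)]
    exact Finset.prod_congr rfl fun i _ => by
      rw [← hmapZ i, Measure.map_apply (hZmeas i) (hs i)]
  set B : Fin (n + 1) → Set (Fin (n + 1) → γ) := fun j =>
    {f | (univ.filter fun i : Fin (n + 1) => S (f i) < S (f j)).card < k} with hB
  have hBmeas : ∀ j, MeasurableSet (B j) := by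
    intro j
    have hcard : Measurable fun f : Fin (n + 1) → γ =>
        (univ.filter fun i : Fin (n + 1) => S (f i) < S (f j)).card := by
      simp only [Finset.card_filter]
      exact Finset.measurable_sum _ fun i _ =>
        Measurable.ite (measurableSet_lt (hSmeas.comp (measurable_pi_apply i))
          (hSmeas.comp (measurable_pi_apply j))) measurable_const measurable_const
    exact hcard (show MeasurableSet (Set.Iio k) from trivial)
  have hmeasA : ∀ j, volume (W ⁻¹' B j) = Measure.pi (fun _ : Fin (n + 1) => ν) (B j) :=
    fun j => by rw [← hW, Measure.map_apply hWmeas (hBmeas j)]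
  -- permutation invariance
  have hperm : ∀ j, Measure.pi (fun _ : Fin (n + 1) => ν) (B j)
      = Measure.pi (fun _ : Fin (n + 1) => ν) (B (Fin.last n)) := by
    intro j
    set σ := Equiv.swap j (Fin.last n) with hσ
    have hσmeas : Measurable fun f : Fin (n + 1) → γ => f ∘ σ :=
      measurable_pi_lambda _ fun i => measurable_pi_apply (σ i)
    have hmp : MeasurePreserving (fun f : Fin (n + 1) → γ => f ∘ σ)
        (Measure.pi fun _ => ν) (Measure.pi fun _ => ν) := by
      refine ⟨hσmeas, ?_⟩
      refine (Measure.pi_eq fun s hs => ?_).symm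
      rw [Measure.map_apply hσmeas (MeasurableSet.univ_pi hs)]
      have hpre : (fun f : Fin (n + 1) → γ => f ∘ σ) ⁻¹' Set.pi Set.univ s
          = Set.pi Set.univ (fun i => s (σ.symm i)) := by
        ext f
        simp only [Set.mem_preimage, Set.mem_pi, Set.mem_univ, true_implies, Function.comp]
        constructor
        · intro h i
          simpa using h (σ.symm i)
        · intro h i
          simpa using h (σ i)
      rw [hpre, Measure.pi_pi]
      exact Equiv.prod_comp σ.symm (fun i => ν (s i))
    have hsetpre : (fun f : Fin (n + 1) → γ => f ∘ σ) ⁻¹' B (Fin.last n) = B j := by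
      ext f
      simp only [Set.mem_preimage, hB, Set.mem_setOf_eq, Function.comp]
      have hlast : σ (Fin.last n) = j := by rw [hσ]; exact Equiv.swap_apply_right _ _
      simp only [hlast]
      constructor
      · intro h
        rwa [aux_filter_perm_card σ (fun i => S (f i) < S (f j))] at h
      · intro h
        rwa [aux_filter_perm_card σ (fun i => S (f i) < S (f j))]
    rw [← hsetpre]
    exact hmp.measure_preimage (hBmeas (Fin.last n)).nullMeasurableSet
  -- pointwise counting
  have hpoint : ∀ ω, k ≤ (univ.filter fun j => ω ∈ W ⁻¹' B j).card := by
    intro ω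
    have h := aux_count hkle (fun i => S (Z i ω))
    refine le_trans h (le_of_eq ?_)
    congr 1
    ext j
    simp only [mem_filter, mem_univ, true_and, Set.mem_preimage, hB, Set.mem_setOf_eq, hWdef]
  have hsum : (k : ℝ≥0∞) ≤ ∑ j, volume (W ⁻¹' B j) :=
    aux_sum _ (fun j => hWmeas (hBmeas j)) hpoint
  have hsum' : (k : ℝ≥0∞) ≤ ((n : ℝ≥0∞) + 1) * volume (W ⁻¹' B (Fin.last n)) := by
    refine hsum.trans (le_of_eq ?_)
    have : ∀ j, volume (W ⁻¹' B j) = volume (W ⁻¹' B (Fin.last n)) := by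
      intro j
      rw [hmeasA j, hperm j, ← hmeasA (Fin.last n)]
    rw [Finset.sum_congr rfl fun j _ => this j]
    simp [Finset.card_univ, mul_comm]
  -- subset of the target event
  have hsubset : W ⁻¹' B (Fin.last n) ⊆ {ω : Ω | (S (Z (Fin.last n) ω) : EReal) ≤
      sInf {t : EReal | k ≤ (univ.filter fun i : Fin n =>
        (S (Z i.castSucc ω) : EReal) ≤ t).card}} := by
    intro ω hω
    simp only [Set.mem_preimage, hB, Set.mem_setOf_eq, hWdef] at hω
    simp only [Set.mem_setOf_eq]
    refine le_sInf fun t ht => ?_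
    simp only [Set.mem_setOf_eq] at ht
    by_contra hts
    push_neg at hts
    have hk' : k ≤ (univ.filter fun i : Fin (n + 1) =>
        S (Z i ω) < S (Z (Fin.last n) ω)).card := by
      refine le_trans ht (Finset.card_le_card_of_injOn (fun i => i.castSucc) ?_
        (fun a _ b _ h => Fin.castSucc_injective _ h))
      intro i hi
      simp only [mem_coe, mem_filter, mem_univ, true_and] at hi ⊢
      have h2 : ((S (Z i.castSucc ω) : ℝ) : EReal) < ((S (Z (Fin.last n) ω) : ℝ) : EReal) :=
        lt_of_le_of_lt hi hts
      exact_mod_cast h2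
    exact absurd hk' (not_le.mpr hω)
  have hmono : volume (W ⁻¹' B (Fin.last n)) ≤ volume {ω : Ω | (S (Z (Fin.last n) ω) : EReal) ≤
      sInf {t : EReal | k ≤ (univ.filter fun i : Fin n =>
        (S (Z i.castSucc ω) : EReal) ≤ t).card}} := measure_mono hsubset
  -- final arithmetic
  set m := volume (W ⁻¹' B (Fin.last n)) with hm
  have hc0 : ((n : ℝ≥0∞) + 1) ≠ 0 := by simp
  have hcinf : ((n : ℝ≥0∞) + 1) ≠ ∞ := by finiteness
  have hstep : ENNReal.ofReal (1 - α) * ((n : ℝ≥0∞) + 1) ≤ m * ((n : ℝ≥0∞) + 1) := by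
    have he : ((n : ℝ≥0∞) + 1) = ENNReal.ofReal ((n : ℝ) + 1) := by
      rw [ENNReal.ofReal_add (by positivity) zero_le_one]
      simp
    calc ENNReal.ofReal (1 - α) * ((n : ℝ≥0∞) + 1)
        = ENNReal.ofReal ((1 - α) * ((n : ℝ) + 1)) := by
          rw [he, ← ENNReal.ofReal_mul (by linarith)]
      _ ≤ ENNReal.ofReal (k : ℝ) := ENNReal.ofReal_le_ofReal hlek
      _ = (k : ℝ≥0∞) := ENNReal.ofReal_natCast k
      _ ≤ ((n : ℝ≥0∞) + 1) * m := hsum'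
      _ = m * ((n : ℝ≥0∞) + 1) := mul_comm _ _
  have hfinal : ENNReal.ofReal (1 - α) ≤ m :=
    (ENNReal.mul_le_mul_iff_left hc0 hcinf).mp hstep
  exact hfinal.trans hmono
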